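/- Fix ε, δ with 0 < ε < δ < 1 and for T > 0 set α_m(T) = ψ_m^{-1}(ε ψ_m(ρ_M(T))) / ψ_m^{-1}(δ ψ_m(ρ_M(T))) for 1 ≤ m ≤ M. Then α_M(T) = ε/δ for every T > 0, and for every m with 1 ≤ m ≤ M, α_m(T) → ε/δ as T → 0⁺. -/

import Mathlib

open Filter Set Topology

theorem stmt16
    (M : ℕ) (hM : 2 ≤ M)
    (d : ℝ) (hd : 0 < d)
    (u v w : ℕ → ℝ)
    (hu : ∀ m, 1 ≤ m → m ≤ M - 1 → 0 < u m)
    (hv : ∀ m, 1 ≤ m → m ≤ M - 1 → 0 < v m)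
    (hw : ∀ m, 1 ≤ m → m ≤ M - 1 → 0 < w m)
    (S lam mu : ℕ → ℝ)
    (hS : ∀ m, 2 ≤ m → m ≤ M → 0 < S m)
    (hlam : ∀ m, 1 ≤ m → m ≤ M → 0 < lam m)
    (hmu : ∀ m, 1 ≤ m → m ≤ M → 0 < mu m)
    (ψ : ℕ → ℝ → ℝ)
    (hψM : ∀ y, ψ M y = y)
    (hψrec : ∀ m, 2 ≤ m → m ≤ M → ∀ y,
      ψ (m - 1) y = d * (v (m - 1) / w (m - 1) + 1) * y /
        (u (m - 1) * (S m - lam m * y - mu m * ψ m y)))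
    (ξ : ℕ → ℝ)
    (hξpos : ∀ m, 1 ≤ m → m ≤ M - 1 → 0 < ξ m)
    (hξlt : ∀ m, 1 ≤ m → m + 1 ≤ M - 1 → ξ m < ξ (m + 1))
    (hξzero : ∀ m, 1 ≤ m → m ≤ M - 1 →
      S (m + 1) - lam (m + 1) * ξ m - mu (m + 1) * ψ (m + 1) (ξ m) = 0)
    (hξuniq : ∀ m, 1 ≤ m → m ≤ M - 1 → ∀ y, 0 < y → (m + 1 ≤ M - 1 → y < ξ (m + 1)) →
      S (m + 1) - lam (m + 1) * y - mu (m + 1) * ψ (m + 1) y = 0 → y = ξ m)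
    (hψprop : ∀ m, 1 ≤ m → m ≤ M →
      ContinuousOn (ψ m) {y : ℝ | 0 ≤ y ∧ (m ≤ M - 1 → y < ξ m)} ∧
      StrictMonoOn (ψ m) {y : ℝ | 0 ≤ y ∧ (m ≤ M - 1 → y < ξ m)} ∧
      (∀ y, 0 ≤ y → (m ≤ M - 1 → y < ξ m) → 0 ≤ ψ m y) ∧
      ψ m 0 = 0)
    (hψtop : ∀ m, 1 ≤ m → m ≤ M - 1 → Tendsto (ψ m) (𝓝[<] (ξ m)) atTop)
    (ψinv : ℕ → ℝ → ℝ)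
    (hinv : ∀ m, 1 ≤ m → m ≤ M →
      (∀ y, 0 ≤ y → (m ≤ M - 1 → y < ξ m) → ψinv m (ψ m y) = y) ∧
      (∀ x, 0 ≤ x → ψ m (ψinv m x) = x ∧ 0 ≤ ψinv m x ∧ (m ≤ M - 1 → ψinv m x < ξ m)))
    (ρ : ℝ → ℝ)
    (hρ : ∀ T, 0 ≤ T → ρ T ∈ Set.Ico 0 (ξ 1) ∧ lam 1 * ρ T + mu 1 * ψ 1 (ρ T) = T)
    (ε δ : ℝ) (hε : 0 < ε) (hεδ : ε < δ) (hδ : δ < 1) :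
    (∀ T : ℝ, 0 < T →
      ψinv M (ε * ψ M (ρ T)) / ψinv M (δ * ψ M (ρ T)) = ε / δ) ∧
    (∀ m, 1 ≤ m → m ≤ M →
      Tendsto (fun T => ψinv m (ε * ψ m (ρ T)) / ψinv m (δ * ψ m (ρ T)))
        (𝓝[>] 0) (𝓝 (ε / δ))) := by

  have hM1 : 1 ≤ M := by omega
  -- ψinv M is the identity on nonnegatives
  have hId : ∀ x : ℝ, 0 ≤ x → ψinv M x = x := by
    intro x hx
    have h := ((hinv M hM1 le_rfl).2 x hx).1
    rwa [hψM] at h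
  -- ρ T > 0 for T > 0
  have hρpos : ∀ T : ℝ, 0 < T → 0 < ρ T := by
    intro T hT
    obtain ⟨⟨h0, h1⟩, heq⟩ := hρ T hT.le
    rcases h0.lt_or_eq with h | h
    · exact h
    · exfalso
      have hψ10 : ψ 1 0 = 0 := (hψprop 1 le_rfl hM1).2.2.2
      rw [← h, hψ10] at heq
      simp at heq
      linarith
  -- linear behaviour of ψ m at 0⁺
  have key : ∀ k m, 1 ≤ m → m + k = M →
      ∃ c : ℝ, 0 < c ∧ Tendsto (fun y => ψ m y / y) (𝓝[>] (0:ℝ)) (𝓝 c) := by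
    intro k
    induction k with
    | zero =>
      intro m hm hmk
      simp only [Nat.add_zero] at hmk
      subst hmk
      refine ⟨1, one_pos, ?_⟩
      apply Tendsto.congr' _ tendsto_const_nhds
      filter_upwards [self_mem_nhdsWithin] with y hy
      rw [hψM, div_self (ne_of_gt hy)]
    | succ k ih =>
      intro m hm hmk
      obtain ⟨c', hc', htend'⟩ := ih (m + 1) (by omega) (by omega)
      have hmM1 : m ≤ M - 1 := by omega
      have hm1M : m + 1 ≤ M := by omega
      have hum : 0 < u m := hu m hm hmM1
      have hvm : 0 < v m := hv m hm hmM1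
      have hwm : 0 < w m := hw m hm hmM1
      have hSm : 0 < S (m + 1) := hS (m + 1) (by omega) hm1M
      have hrec : ∀ y, ψ m y = d * (v m / w m + 1) * y /
          (u m * (S (m+1) - lam (m+1) * y - mu (m+1) * ψ (m+1) y)) := by
        intro y
        have := hψrec (m + 1) (by omega) hm1M y
        simpa using this
      -- ψ (m+1) tends to 0
      have hψ1to0 : Tendsto (ψ (m + 1)) (𝓝[>] (0:ℝ)) (𝓝 0) := by
        have hidt : Tendsto (fun y : ℝ => y) (𝓝[>] (0:ℝ)) (𝓝 0) :=
          tendsto_id.mono_left nhdsWithin_le_nhds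
        have := htend'.mul hidt
        rw [mul_zero] at this
        apply this.congr'
        filter_upwards [self_mem_nhdsWithin] with y hy
        rw [div_mul_cancel₀ _ (ne_of_gt hy)]
      set K : ℝ := d * (v m / w m + 1) with hK
      have hKpos : 0 < K := by
        have : 0 < v m / w m := div_pos hvm hwm
        positivity
      -- denominator tends to u m * S (m+1)
      have hDen : Tendsto (fun y => u m * (S (m+1) - lam (m+1) * y - mu (m+1) * ψ (m+1) y))
          (𝓝[>] (0:ℝ)) (𝓝 (u m * S (m+1))) := by
        have hidt : Tendsto (fun y : ℝ => y) (𝓝[>] (0:ℝ)) (𝓝 0) :=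
          tendsto_id.mono_left nhdsWithin_le_nhds
        have h1 : Tendsto (fun y => S (m+1) - lam (m+1) * y - mu (m+1) * ψ (m+1) y)
            (𝓝[>] (0:ℝ)) (𝓝 (S (m+1))) := by
          have := ((tendsto_const_nhds (x := S (m+1)) (f := 𝓝[>] (0:ℝ))).sub
            ((tendsto_const_nhds (x := lam (m+1))).mul hidt)).sub
            ((tendsto_const_nhds (x := mu (m+1))).mul hψ1to0)
          simpa using this
        simpa using (tendsto_const_nhds (x := u m) (f := 𝓝[>] (0:ℝ))).mul h1
      refine ⟨K / (u m * S (m+1)), div_pos hKpos (mul_pos hum hSm), ?_⟩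
      have hlim := (tendsto_const_nhds (x := K) (f := 𝓝[>] (0:ℝ))).div hDen (mul_pos hum hSm).ne'
      apply hlim.congr'
      filter_upwards [self_mem_nhdsWithin] with y hy
      simp only [Pi.div_apply]
      rw [hrec y, div_div, mul_div_mul_right _ _ (ne_of_gt hy)]
  -- monotone comparison of ξ with ξ 1
  have hξmono : ∀ j, 1 ≤ j → j ≤ M - 1 → ξ 1 ≤ ξ j := by
    intro j
    induction j with
    | zero => intro h; omega
    | succ n ih =>
      intro h1 h2
      rcases Nat.eq_or_lt_of_le h1 with h | h
      · simp [← h]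
      · have hn1 : 1 ≤ n := by omega
        have hn2 : n ≤ M - 1 := by omega
        exact le_trans (ih hn1 hn2) (le_of_lt (hξlt n hn1 (by omega)))
  constructor
  · -- part 1
    intro T hT
    have h0 := hρpos T hT
    rw [hψM, hId (ε * ρ T) (mul_pos hε h0).le, hId (δ * ρ T) (mul_pos (lt_trans hε hεδ) h0).le,
      mul_div_mul_right _ _ (ne_of_gt h0)]
  · -- part 2
    intro m hm hmM
    obtain ⟨c, hc, htend⟩ := key (M - m) m hm (by omega)
    obtain ⟨hcont, hsmono, hnonneg, hzero⟩ := hψprop m hm hmM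
    have hmem0 : (0:ℝ) ∈ {y : ℝ | 0 ≤ y ∧ (m ≤ M - 1 → y < ξ m)} :=
      ⟨le_rfl, fun h => hξpos m hm h⟩
    -- positivity of ψinv m on positives
    have hψinvpos : ∀ x : ℝ, 0 < x → 0 < ψinv m x := by
      intro x hx
      obtain ⟨hx1, hx2, hx3⟩ := (hinv m hm hmM).2 x hx.le
      rcases hx2.lt_or_eq with h | h
      · exact h
      · exfalso
        rw [← h, hzero] at hx1
        linarith
    -- ψinv m tends to 0⁺ at 0⁺
    have hAlim : Tendsto (ψinv m) (𝓝[>] (0:ℝ)) (𝓝[>] (0:ℝ)) := by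
      rw [tendsto_nhdsWithin_iff]
      constructor
      · rw [tendsto_order]
        constructor
        · intro b hb
          filter_upwards [self_mem_nhdsWithin] with x hx
          exact lt_of_lt_of_le hb ((hinv m hm hmM).2 x (le_of_lt hx)).2.1
        · intro b hb
          obtain ⟨η, hη0, hηb, hηξ⟩ : ∃ η : ℝ, 0 < η ∧ η ≤ b ∧ (m ≤ M - 1 → η < ξ m) := by
            by_cases hcase : m ≤ M - 1
            · have hξm := hξpos m hm hcase
              refine ⟨min b (ξ m) / 2, by positivity, ?_, fun _ => ?_⟩
              · have := min_le_left b (ξ m)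
                linarith
              · calc min b (ξ m) / 2 < min b (ξ m) := by
                      have : 0 < min b (ξ m) := lt_min hb hξm
                      linarith
                  _ ≤ ξ m := min_le_right _ _
            · exact ⟨b / 2, by positivity, by linarith, fun h => absurd h hcase⟩
          have hηmem : η ∈ {y : ℝ | 0 ≤ y ∧ (m ≤ M - 1 → y < ξ m)} := ⟨hη0.le, hηξ⟩
          have hψη : 0 < ψ m η := by
            have := hsmono hmem0 hηmem hη0
            rwa [hzero] at this
          filter_upwards [Ioo_mem_nhdsGT_of_mem (Set.left_mem_Ico.2 hψη)] with x hx
          obtain ⟨hx0, hxη⟩ := hx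
          obtain ⟨hx1, hx2, hx3⟩ := (hinv m hm hmM).2 x hx0.le
          by_contra hcon
          push_neg at hcon
          have hinvmem : ψinv m x ∈ {y : ℝ | 0 ≤ y ∧ (m ≤ M - 1 → y < ξ m)} := ⟨hx2, hx3⟩
          have : ψ m η ≤ ψ m (ψinv m x) :=
            hsmono.monotoneOn hηmem hinvmem (le_trans hηb hcon) -- η ≤ b ≤ ψinv x? no!
          rw [hx1] at this
          linarith
      · filter_upwards [self_mem_nhdsWithin] with x hx
        exact hψinvpos x hx
    -- ψinv m x / x tends to 1/c
    have hrecip : Tendsto (fun y => y / ψ m y) (𝓝[>] (0:ℝ)) (𝓝 (1 / c)) := by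
      have h1 := htend.inv₀ (ne_of_gt hc)
      simp only [one_div]
      apply h1.congr
      intro y
      rw [inv_div]
    have hB : Tendsto (fun x => ψinv m x / x) (𝓝[>] (0:ℝ)) (𝓝 (1 / c)) := by
      have hcomp := hrecip.comp hAlim
      apply hcomp.congr'
      filter_upwards [self_mem_nhdsWithin] with x hx
      simp only [Function.comp_apply]
      rw [((hinv m hm hmM).2 x (le_of_lt hx)).1]
    -- ρ tends to 0⁺
    have hρtend : Tendsto ρ (𝓝[>] (0:ℝ)) (𝓝[>] (0:ℝ)) := by
      rw [tendsto_nhdsWithin_iff]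
      constructor
      · have hl1 := hlam 1 le_rfl hM1
        apply squeeze_zero' (t₀ := 𝓝[>] (0:ℝ)) (g := fun T => T / lam 1)
        · filter_upwards [self_mem_nhdsWithin] with T hT
          exact (hρ T (le_of_lt hT)).1.1
        · filter_upwards [self_mem_nhdsWithin] with T hT
          obtain ⟨⟨h0, h1⟩, heq⟩ := hρ T (le_of_lt hT)
          have hψ1 : 0 ≤ ψ 1 (ρ T) := (hψprop 1 le_rfl hM1).2.2.1 (ρ T) h0 (fun _ => h1)
          have hmu1 := hmu 1 le_rfl hM1
          rw [le_div_iff₀ hl1]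
          nlinarith
        · have : Tendsto (fun T : ℝ => T / lam 1) (𝓝 (0:ℝ)) (𝓝 (0 / lam 1)) :=
            tendsto_id.div_const _
          rw [zero_div] at this
          exact this.mono_left nhdsWithin_le_nhds
      · filter_upwards [self_mem_nhdsWithin] with T hT
        exact hρpos T hT
    -- ψ m ∘ ρ tends to 0⁺
    have hρmem : ∀ T : ℝ, 0 < T → ρ T ∈ {y : ℝ | 0 ≤ y ∧ (m ≤ M - 1 → y < ξ m)} := by
      intro T hT
      obtain ⟨⟨h0, h1⟩, _⟩ := hρ T hT.le
      exact ⟨h0, fun hmm => lt_of_lt_of_le h1 (hξmono m hm hmm)⟩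
    have hsm : Tendsto (fun T => ψ m (ρ T)) (𝓝[>] (0:ℝ)) (𝓝[>] (0:ℝ)) := by
      rw [tendsto_nhdsWithin_iff]
      constructor
      · have hcomp := htend.comp hρtend
        have hρ0 : Tendsto ρ (𝓝[>] (0:ℝ)) (𝓝 0) := hρtend.mono_right nhdsWithin_le_nhds
        have := hcomp.mul hρ0
        rw [mul_zero] at this
        apply this.congr'
        filter_upwards [self_mem_nhdsWithin] with T hT
        simp only [Function.comp_apply]
        rw [div_mul_cancel₀ _ (ne_of_gt (hρpos T hT))]
      · filter_upwards [self_mem_nhdsWithin] with T hT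
        have := hsmono hmem0 (hρmem T hT) (hρpos T hT)
        rwa [hzero] at this
    -- scaled versions
    have hscale : ∀ a : ℝ, 0 < a →
        Tendsto (fun T => a * ψ m (ρ T)) (𝓝[>] (0:ℝ)) (𝓝[>] (0:ℝ)) := by
      intro a ha
      rw [tendsto_nhdsWithin_iff]
      constructor
      · have := (tendsto_const_nhds (x := a) (f := 𝓝[>] (0:ℝ))).mul
          (hsm.mono_right nhdsWithin_le_nhds)
        rwa [mul_zero] at this
      · filter_upwards [self_mem_nhdsWithin] with T hT
        have hs := hsm
        have hspos : 0 < ψ m (ρ T) := by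
          have := hsmono hmem0 (hρmem T hT) (hρpos T hT)
          rwa [hzero] at this
        exact mul_pos ha hspos
    have hεlim : Tendsto (fun T => ψinv m (ε * ψ m (ρ T)) / (ε * ψ m (ρ T)))
        (𝓝[>] (0:ℝ)) (𝓝 (1 / c)) := hB.comp (hscale ε hε)
    have hδlim : Tendsto (fun T => ψinv m (δ * ψ m (ρ T)) / (δ * ψ m (ρ T)))
        (𝓝[>] (0:ℝ)) (𝓝 (1 / c)) := hB.comp (hscale δ (lt_trans hε hεδ))
    have hdiv := (hεlim.div hδlim (one_div_pos.2 hc).ne').mul_const (ε / δ)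
    have heq1 : (1 / c) / (1 / c) * (ε / δ) = ε / δ := by
      rw [div_self (one_div_pos.2 hc).ne', one_mul]
    rw [heq1] at hdiv
    apply hdiv.congr'
    filter_upwards [self_mem_nhdsWithin] with T hT
    simp only [Pi.div_apply]
    have hspos : 0 < ψ m (ρ T) := by
      have := hsmono hmem0 (hρmem T hT) (hρpos T hT)
      rwa [hzero] at this
    set s := ψ m (ρ T) with hs
    set A := ψinv m (ε * s) with hA
    set B := ψinv m (δ * s) with hB2
    have hBpos : 0 < B := hψinvpos _ (mul_pos (lt_trans hε hεδ) hspos)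
    have hδ0 : (0:ℝ) < δ := lt_trans hε hεδ
    field_simp
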